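/- arXiv:1103.1176 — 2 statements merged into one kernel-verified Lean document; each statement's English description precedes it below -/
import Mathlib

section
/- For every positive integer n and all complex numbers x, z: ∑_{A ∈ ASM(n), μ(A)=0} x^{ν(A)} z^{ρ(A)} = [n]_{xz} · ∏_{m=1}^{n−1} [m]_x, and ∑_{D ∈ DPP(n), μ(D)=0} x^{ν(D)} z^{ρ(D)} = [n]_{xz} · ∏_{m=1}^{n−1} [m]_x, where [m]_q = 1 + q + … + q^{m−1}. -/
open Finset Matrix

/-- An n×n alternating sign matrix: entries in {-1,0,1}, row and column sums 1,
and nonzero entries alternate in sign along each row and each column. -/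
def IsASM (n : ℕ) (A : Matrix (Fin n) (Fin n) ℤ) : Prop :=
  (∀ i j, A i j = -1 ∨ A i j = 0 ∨ A i j = 1) ∧
  (∀ i, ∑ j, A i j = 1) ∧
  (∀ j, ∑ i, A i j = 1) ∧
  (∀ (i j₁ j₂ : Fin n), j₁ < j₂ → A i j₁ ≠ 0 → A i j₂ ≠ 0 →
    (∀ j, j₁ < j → j < j₂ → A i j = 0) → A i j₂ = -A i j₁) ∧
  (∀ (j i₁ i₂ : Fin n), i₁ < i₂ → A i₁ j ≠ 0 → A i₂ j ≠ 0 →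
    (∀ i, i₁ < i → i < i₂ → A i j = 0) → A i₂ j = -A i₁ j)

/-- ν(A) = ∑_{1≤i<i'≤n, 1≤j'≤j≤n} A_{i j} A_{i' j'}. -/
def nuASM {n : ℕ} (A : Matrix (Fin n) (Fin n) ℤ) : ℤ :=
  ∑ i : Fin n, ∑ i' : Fin n, ∑ j : Fin n, ∑ j' : Fin n,
    if i < i' ∧ j' ≤ j then A i j * A i' j' else 0

/-- μ(A) = number of entries of A equal to -1. -/
def muASM {n : ℕ} (A : Matrix (Fin n) (Fin n) ℤ) : ℕ :=
  (Finset.univ.filter fun p : Fin n × Fin n => A p.1 p.2 = -1).card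

open Classical in
/-- ρ(A) = number of 0's to the left of the (unique) 1 in the first row of A. -/
noncomputable def rhoASM {n : ℕ} (A : Matrix (Fin n) (Fin n) ℤ) : ℕ :=
  (Finset.univ.filter fun j : Fin n =>
    ∃ i : Fin n, (i : ℕ) = 0 ∧ A i j = 0 ∧ ∃ j' : Fin n, j < j' ∧ A i j' = 1).card

/-- A descending plane partition, encoded as the list of its rows (row i+1 of the array,
which occupies columns i+1,…,λ_{i+1}+i, is the (i)-th list, 0-indexed).
Parts are positive, decrease weakly along rows, decrease strictly down columns
(the entry of row i+2 at inner position k sits below the entry of row i+1 at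
inner position k+1), and D_{ii} > λ_i ≥ D_{i+1,i+1}. -/
def IsDPP (rows : List (List ℕ)) : Prop :=
  (∀ r ∈ rows, r ≠ [] ∧ (∀ p ∈ r, 0 < p) ∧ r.Chain' (· ≥ ·) ∧ r.length < r.getD 0 0) ∧
  (∀ i : ℕ, i + 1 < rows.length →
    (∀ k < (rows.getD (i + 1) []).length,
      (rows.getD (i + 1) []).getD k 0 < (rows.getD i []).getD (k + 1) 0) ∧
    (rows.getD (i + 1) []).getD 0 0 ≤ (rows.getD i []).length)

/-- ν(D) = number of parts with D_{i j} > j − i (the part of row i at inner position k,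
0-indexed, has j − i = k). -/
def nuDPP (rows : List (List ℕ)) : ℕ :=
  (rows.map fun r => ((List.range r.length).filter fun k => k < r.getD k 0).length).sum

/-- μ(D) = number of parts with D_{i j} ≤ j − i (the special parts). -/
def muDPP (rows : List (List ℕ)) : ℕ :=
  (rows.map fun r => ((List.range r.length).filter fun k => r.getD k 0 ≤ k).length).sum

/-- ρ(D) = number of parts of D equal to n. -/
def rhoDPP (n : ℕ) (rows : List (List ℕ)) : ℕ :=
  (rows.map fun r => r.count n).sum

/-- DPP(n): the set of descending plane partitions all of whose parts are at most n. -/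
def DPPset (n : ℕ) : Set (List (List ℕ)) :=
  {rows | IsDPP rows ∧ ∀ r ∈ rows, ∀ p ∈ r, p ≤ n}

namespace DPPaux


/-- countP (v ≤ ·) = countP (v < ·) + count v -/
lemma countP_le_split (v : ℕ) (L : List ℕ) :
    L.countP (fun p => decide (v ≤ p)) = L.countP (fun p => decide (v < p)) + L.count v := by
  induction L with
  | nil => simp
  | cons a L ih =>
    simp only [List.countP_cons, List.count_cons, ih]
    by_cases h1 : v ≤ a <;> by_cases h2 : v < a <;> by_cases h3 : a = v <;>
      simp [h1, h2, h3] <;> omega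

/-- if an entry at index a is ≥ v, then countP (v ≤ ·) ≥ a+1 (for decreasing lists). -/
lemma countP_ge_of_getD (v : ℕ) (L : List ℕ) (hL : L.Pairwise (· ≥ ·)) (a : ℕ)
    (ha : a < L.length) (h : v ≤ L.getD a 0) :
    a + 1 ≤ L.countP (fun p => decide (v ≤ p)) := by
  induction L generalizing a with
  | nil => simp at ha
  | cons b L ih =>
    rcases List.pairwise_cons.1 hL with ⟨hb, hL'⟩
    cases a with
    | zero =>
      simp only [List.getD_cons_zero] at h
      simp [List.countP_cons, h]
    | succ a =>
      simp only [List.getD_cons_succ] at h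
      simp only [List.length_cons] at ha
      have h2 := ih hL' a (by omega) h
      have hvb : v ≤ b := by
        have hmem : L.getD a 0 ∈ L := by
          rw [List.getD_eq_getElem _ _ (by omega : a < L.length)]
          exact List.getElem_mem _
        exact le_trans h (hb _ hmem)
      simp [List.countP_cons, hvb]
      omega

/-- if entry at index a is ≤ v then countP (v < ·) ≤ a (for decreasing lists);
getD with default 0 makes this fine out of range too. -/
lemma countP_gt_le_of_getD (v : ℕ) (L : List ℕ) (hL : L.Pairwise (· ≥ ·)) (a : ℕ)
    (h : L.getD a 0 ≤ v) :
    L.countP (fun p => decide (v < p)) ≤ a := by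
  induction L generalizing a with
  | nil => simp
  | cons b L ih =>
    rcases List.pairwise_cons.1 hL with ⟨hb, hL'⟩
    cases a with
    | zero =>
      simp only [List.getD_cons_zero] at h
      have : (b :: L).countP (fun p => decide (v < p)) = 0 := by
        rw [List.countP_eq_zero]
        intro p hp
        have : p ≤ b := by
          rcases List.mem_cons.1 hp with rfl | hp
          · exact le_rfl
          · exact hb _ hp
        simp; omega
      omega
    | succ a =>
      simp only [List.getD_cons_succ] at h
      have h2 := ih hL' a h
      by_cases hvb : v < b
      · -- need: b > v still allowed, count ≤ a + 1
        simp [List.countP_cons, hvb]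
        omega
      · simp [List.countP_cons, hvb]
        omega

/-- if entry at index a is < v then countP (v ≤ ·) ≤ a. -/
lemma countP_le_le_of_getD (v : ℕ) (L : List ℕ) (hL : L.Pairwise (· ≥ ·)) (a : ℕ)
    (h : L.getD a 0 < v) :
    L.countP (fun p => decide (v ≤ p)) ≤ a := by
  induction L generalizing a with
  | nil => simp
  | cons b L ih =>
    rcases List.pairwise_cons.1 hL with ⟨hb, hL'⟩
    cases a with
    | zero =>
      simp only [List.getD_cons_zero] at h
      have : (b :: L).countP (fun p => decide (v ≤ p)) = 0 := by
        rw [List.countP_eq_zero]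
        intro p hp
        have : p ≤ b := by
          rcases List.mem_cons.1 hp with rfl | hp
          · exact le_rfl
          · exact hb _ hp
        simp; omega
      omega
    | succ a =>
      simp only [List.getD_cons_succ] at h
      have h2 := ih hL' a h
      by_cases hvb : v ≤ b
      · simp [List.countP_cons, hvb]; omega
      · simp [List.countP_cons, hvb]; omega

/-- decreasing list: getD is antitone (within range for the larger index). -/
lemma getD_le_getD (L : List ℕ) (hL : L.Pairwise (· ≥ ·)) (a b : ℕ) (hab : a ≤ b)
    (hb : b < L.length) : L.getD b 0 ≤ L.getD a 0 := by
  rcases eq_or_lt_of_le hab with rfl | hab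
  · exact le_rfl
  · have := List.pairwise_iff_getElem.1 hL a b (by omega) hb hab
    rwa [List.getD_eq_getElem _ _ (by omega : a < L.length), List.getD_eq_getElem _ _ hb]

/-- last-≥v element: the entry at index (countP (v ≤ ·)) − 1 is ≥ v. -/
lemma getD_of_countP (v : ℕ) (L : List ℕ) (hL : L.Pairwise (· ≥ ·))
    (h : 0 < L.countP (fun p => decide (v ≤ p))) :
    v ≤ L.getD (L.countP (fun p => decide (v ≤ p)) - 1) 0 := by
  by_contra hc
  push_neg at hc
  have := countP_le_le_of_getD v L hL _ hc
  omega



def MuFree (rows : List (List ℕ)) : Prop :=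
  ∀ r ∈ rows, ∀ k < r.length, k < r.getD k 0

lemma isDPP_tail {r : List ℕ} {rest : List (List ℕ)} (h : IsDPP (r :: rest)) : IsDPP rest := by
  refine ⟨fun s hs => h.1 s (List.mem_cons_of_mem _ hs), fun i hi => ?_⟩
  have := h.2 (i + 1) (by simpa using Nat.succ_lt_succ hi)
  simpa using this

lemma muFree_tail {r : List ℕ} {rest : List (List ℕ)} (h : MuFree (r :: rest)) : MuFree rest :=
  fun s hs => h s (List.mem_cons_of_mem _ hs)

def cutFn (L : List ℕ) : ℕ :=
  Nat.find (⟨L.length, Or.inl le_rfl⟩ : ∃ k, L.length ≤ k ∨ L.getD k 0 ≤ k)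

lemma cutFn_le_length (L : List ℕ) : cutFn L ≤ L.length :=
  Nat.find_le (Or.inl le_rfl)

lemma lt_of_lt_cutFn {L : List ℕ} {k : ℕ} (h : k < cutFn L) :
    k < L.length ∧ k < L.getD k 0 := by
  have := Nat.find_min (⟨L.length, Or.inl le_rfl⟩ :
    ∃ k, L.length ≤ k ∨ L.getD k 0 ≤ k) h
  push_neg at this
  exact ⟨by omega, by omega⟩

lemma cutFn_spec (L : List ℕ) (h : cutFn L < L.length) : L.getD (cutFn L) 0 ≤ cutFn L := by
  unfold cutFn at h ⊢
  have := Nat.find_spec (⟨L.length, Or.inl le_rfl⟩ :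
    ∃ k, L.length ≤ k ∨ L.getD k 0 ≤ k)
  rcases this with h1 | h1
  · omega
  · exact h1

lemma cutFn_eq {L : List ℕ} {m : ℕ} (h1 : ∀ k < m, k < L.length ∧ k < L.getD k 0)
    (h2 : L.length ≤ m ∨ L.getD m 0 ≤ m) : cutFn L = m := by
  rw [cutFn, Nat.find_eq_iff]
  refine ⟨h2, fun k hk => ?_⟩
  have := h1 k hk
  push_neg
  exact ⟨by omega, by omega⟩

lemma cutFn_pos {L : List ℕ} (h : L ≠ []) (h0 : 0 < L.getD 0 0) : 0 < cutFn L := by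
  rcases Nat.eq_zero_or_pos (cutFn L) with h1 | h1
  · exfalso
    have hlen : 0 < L.length := List.length_pos_iff.2 h
    have := cutFn_spec L (by omega)
    rw [h1] at this
    omega
  · exact h1

def build (L : List ℕ) : List (List ℕ) :=
  if h : L = [] then [] else
    L.take (max 1 (cutFn L)) :: build (L.drop (max 1 (cutFn L)))
  termination_by L.length
  decreasing_by
    simp only [List.length_drop]
    have : 0 < L.length := List.length_pos_iff.2 h
    omega

lemma build_nil : build [] = [] := by rw [build]; simp

lemma build_cons {L : List ℕ} (h : L ≠ []) :
    build L = L.take (max 1 (cutFn L)) :: build (L.drop (max 1 (cutFn L))) := by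
  rw [build]; simp [h]


lemma pairwise_of_row {rows : List (List ℕ)} (h : IsDPP rows) {r : List ℕ} (hr : r ∈ rows) :
    r.Pairwise (· ≥ ·) :=
  List.isChain_iff_pairwise.1 (h.1 r hr).2.2.1

/-- every part of a DPP is at most the top-left entry -/
lemma flatten_le_head {rows : List (List ℕ)} (h : IsDPP rows) :
    ∀ p ∈ rows.flatten, p ≤ (rows.getD 0 []).getD 0 0 := by
  induction rows with
  | nil => simp
  | cons r rest ih =>
    intro p hp
    simp only [List.flatten_cons, List.mem_append] at hp
    simp only [List.getD_cons_zero]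
    rcases hp with hp | hp
    · -- p ∈ r : p ≤ r[0]
      rcases List.mem_iff_getElem.1 hp with ⟨j, hj, rfl⟩
      have hpw := pairwise_of_row h (List.mem_cons_self)
      have := getD_le_getD r hpw 0 j (Nat.zero_le _) hj
      rwa [List.getD_eq_getElem _ _ hj] at this
    · -- p in deeper rows
      have h2 := ih (isDPP_tail h) p hp
      rcases rest with _ | ⟨r2, rest'⟩
      · simp at hp
      · -- p ≤ r2[0] ≤ r.length < r[0]
        have hcond := (h.2 0 (by simp)).2
        simp only [List.getD_cons_zero, List.getD_cons_succ] at hcond h2 ⊢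
        have hrow := (h.1 r (List.mem_cons_self)).2.2.2
        omega

lemma flatten_pairwise {rows : List (List ℕ)} (h : IsDPP rows) (hμ : MuFree rows) :
    rows.flatten.Pairwise (· ≥ ·) := by
  induction rows with
  | nil => simp
  | cons r rest ih =>
    simp only [List.flatten_cons]
    rw [List.pairwise_append]
    refine ⟨pairwise_of_row h (List.mem_cons_self), ih (isDPP_tail h) (muFree_tail hμ), ?_⟩
    intro a ha b hb
    -- b ≤ head of row2 ≤ r.length ≤ r.getD (len-1) ≤ a
    have hlenpos : 0 < r.length := List.length_pos_iff.2 (h.1 r (List.mem_cons_self)).1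
    have hb2 : b ≤ (rest.getD 0 []).getD 0 0 := flatten_le_head (isDPP_tail h) b hb
    have hb3 : (rest.getD 0 []).getD 0 0 ≤ r.length := by
      rcases rest with _ | ⟨r2, rest'⟩
      · simp at hb
      · have := (h.2 0 (by simp)).2
        simpa using this
    rcases List.mem_iff_getElem.1 ha with ⟨j, hj, rfl⟩
    have hpw := pairwise_of_row h (List.mem_cons_self)
    have hlast : r.getD (r.length - 1) 0 ≤ r.getD j 0 :=
      getD_le_getD r hpw j (r.length - 1) (by omega) (by omega)
    have hμr := hμ r (List.mem_cons_self) (r.length - 1) (by omega)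
    rw [List.getD_eq_getElem _ _ hj] at hlast
    omega

/-- adjacency: # of entries ≥ v in row 2 is less than # of entries > v in row 1 (if positive) -/
lemma adj_lemma {r : List ℕ} {rest : List (List ℕ)} (h : IsDPP (r :: rest)) {v : ℕ}
    (hv : 0 < v) :
    (rest.getD 0 []).countP (fun p => decide (v ≤ p)) = 0 ∨
    (rest.getD 0 []).countP (fun p => decide (v ≤ p)) < r.countP (fun p => decide (v < p)) := by
  set r2 := rest.getD 0 [] with hr2
  set A1 := r2.countP (fun p => decide (v ≤ p)) with hA1
  rcases Nat.eq_zero_or_pos A1 with h0 | h0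
  · exact Or.inl h0
  right
  rcases rest with _ | ⟨r2', rest'⟩
  · simp [hr2] at hA1; omega
  have hr2' : r2 = r2' := by simp [hr2]
  have hpw2 : r2.Pairwise (· ≥ ·) := by
    rw [hr2']
    exact pairwise_of_row h (by simp)
  have hget := getD_of_countP v r2 hpw2 h0
  rw [← hA1] at hget
  have hk : A1 - 1 < r2.length := by
    have := List.countP_le_length (l := r2) (p := fun p => decide (v ≤ p))
    omega
  have hcol := (h.2 0 (by simp)).1 (A1 - 1) (by simpa [hr2'] using hk)
  simp only [List.getD_cons_zero, List.getD_cons_succ] at hcol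
  rw [← hr2'] at hcol
  -- hcol : r2.getD (A1-1) 0 < r.getD (A1-1+1) 0
  have hlt : v < r.getD (A1 - 1 + 1) 0 := by omega
  have hrange : A1 - 1 + 1 < r.length := by
    by_contra hc
    push_neg at hc
    rw [List.getD_eq_default _ _ hc] at hlt
    omega
  have hpwr : r.Pairwise (· ≥ ·) := pairwise_of_row h (List.mem_cons_self)
  have key : A1 - 1 + 1 + 1 ≤ r.countP (fun p => decide (v + 1 ≤ p)) :=
    countP_ge_of_getD (v + 1) r hpwr _ hrange (by omega)
  have hcongr : r.countP (fun p => decide (v + 1 ≤ p)) = r.countP (fun p => decide (v < p)) := by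
    apply List.countP_congr
    intro p _
    simp only [decide_eq_true_eq]
    omega
  omega

/-- count of v in flattened DPP is at most countP (v ≤ ·) of the first row -/
lemma count_le_countP {rows : List (List ℕ)} (h : IsDPP rows) {v : ℕ} (hv : 0 < v) :
    rows.flatten.count v ≤ (rows.getD 0 []).countP (fun p => decide (v ≤ p)) := by
  induction rows with
  | nil => simp
  | cons r rest ih =>
    simp only [List.flatten_cons, List.count_append, List.getD_cons_zero]
    have h1 := ih (isDPP_tail h)
    rcases adj_lemma h hv with h2 | h2 <;>
    · have hsplit := countP_le_split v r
      have hcount : r.count v ≤ r.countP (fun p => decide (v ≤ p)) -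
          r.countP (fun p => decide (v < p)) := by omega
      omega

/-- main count bound: each value v occurs fewer than v times in a μ-free DPP -/
lemma count_lt {rows : List (List ℕ)} (h : IsDPP rows) (hμ : MuFree rows) {v : ℕ}
    (hv : 0 < v) : rows.flatten.count v < v := by
  induction rows with
  | nil => simpa using hv
  | cons r rest ih =>
    simp only [List.flatten_cons, List.count_append]
    rcases Nat.eq_zero_or_pos (r.count v) with hc0 | hc0
    · have := ih (isDPP_tail h) (muFree_tail hμ)
      omega
    -- c0 > 0
    set A0 := r.countP (fun p => decide (v ≤ p)) with hA0
    set B0 := r.countP (fun p => decide (v < p)) with hB0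
    have hsplit := countP_le_split v r
    have hpwr : r.Pairwise (· ≥ ·) := pairwise_of_row h (List.mem_cons_self)
    -- A0 ≤ v : the entry at A0 - 1 equals v and MuFree
    have hA0pos : 0 < A0 := by omega
    have hgetA0 : v ≤ r.getD (A0 - 1) 0 := getD_of_countP v r hpwr hA0pos
    have hA0len : A0 ≤ r.length := List.countP_le_length
    -- v ∈ r at some index m0 < A0
    have hvmem : v ∈ r := List.count_pos_iff.1 hc0
    rcases List.mem_iff_getElem.1 hvmem with ⟨m0, hm0, hm0v⟩
    have hm0A0 : m0 + 1 ≤ A0 := by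
      have := countP_ge_of_getD v r hpwr m0 hm0 (by rw [List.getD_eq_getElem _ _ hm0]; omega)
      omega
    have heq : r.getD (A0 - 1) 0 = v := by
      have := getD_le_getD r hpwr m0 (A0 - 1) (by omega) (by omega)
      rw [List.getD_eq_getElem _ _ hm0] at this
      omega
    have hA0v : A0 ≤ v := by
      have := hμ r (List.mem_cons_self) (A0 - 1) (by omega)
      omega
    have hrest := count_le_countP (isDPP_tail h) hv (v := v)
    rcases adj_lemma h hv with h2 | h2
    · -- A1 = 0, so count rest = 0
      rcases Nat.eq_zero_or_pos B0 with hB00 | hB00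
      · -- B0 = 0 : head = v, count = c0 ≤ len < v
        have hhead : r.getD 0 0 = v := by
          have h1 : r.getD 0 0 ≤ v := by
            rcases Nat.eq_zero_or_pos (r.getD 0 0) with hz | hz
            · omega
            by_contra hc
            push_neg at hc
            have := countP_ge_of_getD (v+1) r hpwr 0 (by omega)
              (by omega)
            have hcongr : r.countP (fun p => decide (v + 1 ≤ p)) = B0 := by
              rw [hB0]
              apply List.countP_congr
              intro p _
              simp only [decide_eq_true_eq]
              omega
            omega
          have h2' : v ≤ r.getD 0 0 := by
            have := getD_le_getD r hpwr 0 m0 (by omega) hm0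
            rw [List.getD_eq_getElem _ _ hm0] at this
            omega
          omega
        have hrowlen := (h.1 r (List.mem_cons_self)).2.2.2
        have hcv : r.count v ≤ r.length := List.count_le_length
        omega
      · omega
    · omega


lemma getD_take (L : List ℕ) (c k : ℕ) (hk : k < c) : (L.take c).getD k 0 = L.getD k 0 := by
  by_cases h : k < L.length
  · rw [List.getD_eq_getElem _ _ (by simp; omega), List.getD_eq_getElem _ _ h,
      List.getElem_take]
  · rw [List.getD_eq_default _ _ (by simp; omega), List.getD_eq_default _ _ (by omega)]

lemma getD_drop (L : List ℕ) (c k : ℕ) : (L.drop c).getD k 0 = L.getD (c + k) 0 := by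
  by_cases h : c + k < L.length
  · rw [List.getD_eq_getElem _ _ (by simp; omega), List.getD_eq_getElem _ _ h,
      List.getElem_drop]
  · rw [List.getD_eq_default _ _ (by simp; omega), List.getD_eq_default _ _ (by omega)]

/-- build recovers a μ-free DPP from its flattening -/
lemma build_flatten {rows : List (List ℕ)} (h : IsDPP rows) (hμ : MuFree rows) :
    build rows.flatten = rows := by
  induction rows with
  | nil => simp [build_nil]
  | cons r rest ih =>
    have hr := h.1 r (List.mem_cons_self)
    have hrne : r ≠ [] := hr.1
    have hrlen : 0 < r.length := List.length_pos_iff.2 hrne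
    simp only [List.flatten_cons]
    set L := r ++ rest.flatten with hL
    have hLlen : L.length = r.length + rest.flatten.length := by simp [hL]
    have hcut : cutFn L = r.length := by
      apply cutFn_eq
      · intro k hk
        constructor
        · omega
        · rw [hL, List.getD_append _ _ _ _ hk]
          exact hμ r (List.mem_cons_self) k hk
      · rcases rest with _ | ⟨r2, rest'⟩
        · left; simp [hL]
        · right
          have h2ne : r2 ≠ [] := (h.1 r2 (by simp)).1
          have h2len : 0 < r2.length := List.length_pos_iff.2 h2ne
          have : L.getD r.length 0 = r2.getD 0 0 := by
            rw [hL, List.getD_append_right _ _ _ _ le_rfl, Nat.sub_self]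
            simp only [List.flatten_cons]
            rw [List.getD_append _ _ _ _ h2len]
          rw [this]
          have := (h.2 0 (by simp)).2
          simpa using this
    have hLne : L ≠ [] := by
      intro hc
      rw [hc] at hLlen
      simp at hLlen
      omega
    rw [build_cons hLne, hcut, max_eq_right hrlen]
    congr 1
    · rw [hL, List.take_left]
    · rw [hL, List.drop_left]
      exact ih (isDPP_tail h) (muFree_tail hμ)

/-- build produces a valid μ-free DPP from any valid sorted list -/
lemma build_spec : ∀ (N : ℕ) (L : List ℕ), L.length ≤ N → L.Pairwise (· ≥ ·) →
    (∀ p ∈ L, 0 < p) → (∀ v, 0 < v → L.count v < v) →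
    IsDPP (build L) ∧ MuFree (build L) ∧ (build L).flatten = L := by
  intro N
  induction N with
  | zero =>
    intro L hlen _ _ _
    have : L = [] := List.length_eq_zero_iff.1 (by omega)
    subst this
    exact ⟨⟨by simp [build_nil], by simp [build_nil]⟩, by simp [MuFree, build_nil], by simp [build_nil]⟩
  | succ N ih =>
    intro L hlen hpw hpos hcnt
    rcases eq_or_ne L [] with rfl | hLne
    · exact ⟨⟨by simp [build_nil], by simp [build_nil]⟩, by simp [MuFree, build_nil], by simp [build_nil]⟩
    have hLlen : 0 < L.length := List.length_pos_iff.2 hLne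
    have hhead : 0 < L.getD 0 0 := by
      rw [List.getD_eq_getElem _ _ hLlen]
      exact hpos _ (List.getElem_mem _)
    set c := cutFn L with hc
    have hcpos : 0 < c := cutFn_pos hLne hhead
    have hclen : c ≤ L.length := cutFn_le_length L
    have hmax : max 1 c = c := max_eq_right hcpos
    set r := L.take c with hrdef
    set M := L.drop c with hMdef
    have hrlen : r.length = c := by rw [hrdef]; simp; omega
    have hMsub : M.Sublist L := List.drop_sublist _ _
    have hrsub : r.Sublist L := List.take_sublist _ _
    obtain ⟨hD', hμ', hFl'⟩ := ih M (by rw [hMdef]; simp; omega)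
      (hpw.sublist hMsub) (fun p hp => hpos p (hMsub.subset hp))
      (fun v hv => lt_of_le_of_lt (hMsub.count_le v) (hcnt v hv))
    have hbuild : build L = r :: build M := by rw [build_cons hLne, hmax]
    have hflat : (build L).flatten = L := by
      rw [hbuild]
      simp only [List.flatten_cons, hFl']
      rw [hrdef, hMdef, List.take_append_drop]
    -- entries of r satisfy MuFree
    have hrMu : ∀ k < r.length, k < r.getD k 0 := by
      intro k hk
      rw [hrlen] at hk
      rw [hrdef, getD_take _ _ _ hk]
      exact (lt_of_lt_cutFn (hc ▸ hk)).2
    -- r.length < r.getD 0 0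
    have hr0 : r.getD 0 0 = L.getD 0 0 := by rw [hrdef, getD_take _ _ _ hcpos]
    have hrhead : r.length < r.getD 0 0 := by
      rw [hrlen, hr0]
      set h0 := L.getD 0 0 with hh0
      -- c ≤ h0
      have h1 : L.getD (c-1) 0 ≤ h0 := getD_le_getD L hpw 0 (c-1) (by omega) (by omega)
      have h2 : c - 1 < L.getD (c-1) 0 := (lt_of_lt_cutFn (by omega)).2
      have hch : c ≤ h0 := by omega
      rcases eq_or_lt_of_le hch with hceq | hlt
      · -- c = h0 : contradiction via count
        exfalso
        have hc1 : L.getD (c-1) 0 = h0 := by omega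
        have hcp1 : c ≤ L.countP (fun p => decide (h0 ≤ p)) := by
          have := countP_ge_of_getD h0 L hpw (c-1) (by omega) (by omega)
          omega
        have hcp2 : L.countP (fun p => decide (h0 < p)) = 0 := by
          have := countP_gt_le_of_getD h0 L hpw 0 (by omega)
          omega
        have := countP_le_split h0 L
        have := hcnt h0 (by omega)
        omega
      · exact hlt
    constructor
    · -- IsDPP
      rw [hbuild]
      constructor
      · intro s hs
        rcases List.mem_cons.1 hs with rfl | hs
        · refine ⟨by intro hc'; rw [hc'] at hrlen; simp at hrlen; omega,
            fun p hp => hpos p (hrsub.subset hp),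
            List.isChain_iff_pairwise.2 (hpw.sublist hrsub), hrhead⟩
        · exact hD'.1 s hs
      · intro i hi
        cases i with
        | succ i =>
          have := hD'.2 i (by simpa using hi)
          simpa using this
        | zero =>
          simp only [List.getD_cons_succ, List.getD_cons_zero]
          -- row2 exists: build M ≠ []
          rcases eq_or_ne M [] with hMnil | hMne
          · rw [hMnil, build_nil] at hi
            simp at hi
          have hMlenpos : 0 < M.length := List.length_pos_iff.2 hMne
          have hcL : c < L.length := by
            rw [hMdef] at hMlenpos
            simp at hMlenpos
            omega
          have hMhead : 0 < M.getD 0 0 := by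
            rw [List.getD_eq_getElem _ _ hMlenpos]
            exact hpos _ (hMsub.subset (List.getElem_mem _))
          have hM0 : M.getD 0 0 = L.getD c 0 := by
            rw [hMdef, getD_drop, Nat.add_zero]
          have hLc : L.getD c 0 ≤ c := cutFn_spec L (hc ▸ hcL)
          set c2 := cutFn M with hc2
          have hbuildM : build M = M.take (max 1 c2) :: build (M.drop (max 1 c2)) :=
            build_cons hMne
          have hc2pos : 0 < c2 := cutFn_pos hMne hMhead
          have hmax2 : max 1 c2 = c2 := max_eq_right hc2pos
          set row2 := M.take c2 with hrow2
          have hget2 : (build M).getD 0 [] = row2 := by rw [hbuildM, hmax2]; simp [hrow2]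
          rw [hget2]
          have hrow2len : row2.length ≤ c2 := by rw [hrow2]; simp
          have hrow2head : row2.getD 0 0 = M.getD 0 0 := by
            rw [hrow2, getD_take _ _ _ hc2pos]
          -- row2.length < row2 head ≤ c
          have hrow2cond : row2.length < row2.getD 0 0 := by
            have := hD'.1 row2 (by rw [hbuildM, hmax2]; exact List.mem_cons_self)
            exact this.2.2.2
          constructor
          · intro k hk
            have hk1 : k + 1 < c := by
              rw [hrow2head, hM0] at hrow2cond
              omega
            have hkc2 : k < c2 := by omega
            have hkM : k < M.length := by
              rw [hrow2] at hk
              simp at hk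
              omega
            have hrow2k : row2.getD k 0 = L.getD (c + k) 0 := by
              rw [hrow2, getD_take _ _ _ hkc2, hMdef, getD_drop]
            have hrk1 : r.getD (k+1) 0 = L.getD (k+1) 0 := by
              rw [hrdef, getD_take _ _ _ hk1]
            rw [hrow2k, hrk1]
            -- L[c+k] < L[k+1], else contradiction
            have hckL : c + k < L.length := by
              rw [hMdef] at hkM
              simp at hkM
              omega
            have hle : L.getD (c+k) 0 ≤ L.getD (k+1) 0 :=
              getD_le_getD L hpw (k+1) (c+k) (by omega) hckL
            rcases eq_or_lt_of_le hle with heq | hlt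
            · exfalso
              set v := L.getD (c+k) 0 with hv
              have hvpos : 0 < v := by
                have := hrMu  -- not applicable; use MuFree of row2
                have h1 := hμ' row2 (by rw [hbuildM, hmax2]; exact List.mem_cons_self) k hk
                rw [hrow2k] at h1
                omega
              have hcp1 : c + k + 1 ≤ L.countP (fun p => decide (v ≤ p)) :=
                countP_ge_of_getD v L hpw (c+k) hckL (by omega)
              have hcp2 : L.countP (fun p => decide (v < p)) ≤ k + 1 :=
                countP_gt_le_of_getD v L hpw (k+1) (by omega)
              have hsplit := countP_le_split v L
              have hvc : v ≤ c := by
                have := getD_le_getD L hpw c (c+k) (by omega) hckL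
                omega
              have := hcnt v hvpos
              omega
            · exact hlt
          · rw [hrow2head, hM0, hrlen]
            exact hLc
    constructor
    · -- MuFree
      rw [hbuild]
      intro s hs
      rcases List.mem_cons.1 hs with rfl | hs'
      · exact hrMu
      · exact hμ' s hs'
    · exact hflat




lemma muDPP_eq_zero_iff (rows : List (List ℕ)) : muDPP rows = 0 ↔ MuFree rows := by
  rw [muDPP, List.sum_eq_zero_iff]
  constructor
  · intro h r hr k hk
    have h2 := h _ (List.mem_map_of_mem hr)
    rw [List.length_eq_zero_iff, List.filter_eq_nil_iff] at h2
    have h3 := h2 k (List.mem_range.2 hk)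
    simp only [decide_eq_true_eq] at h3
    omega
  · intro h l hl
    rcases List.mem_map.1 hl with ⟨r, hr, rfl⟩
    rw [List.length_eq_zero_iff, List.filter_eq_nil_iff]
    intro k hk
    have := h r hr k (List.mem_range.1 hk)
    simp only [decide_eq_true_eq]
    omega

lemma nuDPP_of_muFree {rows : List (List ℕ)} (h : MuFree rows) :
    nuDPP rows = rows.flatten.length := by
  rw [nuDPP, List.length_flatten]
  congr 1
  apply List.map_congr_left
  intro r hr
  rw [List.filter_eq_self.2, List.length_range]
  intro k hk
  simp only [decide_eq_true_eq]
  exact h r hr k (List.mem_range.1 hk)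

lemma rhoDPP_eq (n : ℕ) (rows : List (List ℕ)) : rhoDPP n rows = rows.flatten.count n := by
  rw [rhoDPP, List.count_flatten]

def Tfin : ℕ → Finset (List ℕ)
  | 0 => {[]}
  | n + 1 => (Finset.range (n + 1) ×ˢ Tfin n).image
      (fun pL => List.replicate pL.1 (n + 1) ++ pL.2)

def Tpred (n : ℕ) (L : List ℕ) : Prop :=
  L.Pairwise (· ≥ ·) ∧ (∀ p ∈ L, p ≤ n) ∧ (∀ v, 0 < v → L.count v < v) ∧ (∀ p ∈ L, 0 < p)

lemma pairwise_replicate_ge (p v : ℕ) : (List.replicate p v).Pairwise (· ≥ ·) := by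
  apply List.pairwise_iff_getElem.2
  intro i j hi hj hij
  rw [List.getElem_replicate, List.getElem_replicate]

lemma mem_Tfin_iff (n : ℕ) (L : List ℕ) : L ∈ Tfin n ↔ Tpred n L := by
  induction n generalizing L with
  | zero =>
    simp only [Tfin, Finset.mem_singleton]
    constructor
    · rintro rfl
      exact ⟨by simp, by simp, by intro v hv; simp; omega, by simp⟩
    · rintro ⟨_, h2, _, h4⟩
      rcases L with _ | ⟨a, L'⟩
      · rfl
      · have := h2 a (by simp)
        have := h4 a (by simp)
        omega
  | succ n ih =>
    constructor
    · intro hL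
      rw [Tfin, Finset.mem_image] at hL
      rcases hL with ⟨⟨p, L'⟩, hmem, rfl⟩
      rw [Finset.mem_product, Finset.mem_range] at hmem
      obtain ⟨hp, hL'⟩ := hmem
      obtain ⟨hpw', hbd', hcnt', hpos'⟩ := (ih L').1 hL'
      have hcnt0 : L'.count (n+1) = 0 := by
        rw [List.count_eq_zero]
        intro hc
        have := hbd' _ hc
        omega
      refine ⟨?_, ?_, ?_, ?_⟩
      · rw [List.pairwise_append]
        refine ⟨pairwise_replicate_ge _ _, hpw', ?_⟩
        intro a ha b hb
        rw [List.eq_of_mem_replicate ha]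
        exact le_trans (hbd' b hb) (by omega)
      · intro q hq
        rcases List.mem_append.1 hq with hq | hq
        · rw [List.eq_of_mem_replicate hq]
        · exact le_trans (hbd' q hq) (by omega)
      · intro v hv
        rw [List.count_append, List.count_replicate]
        by_cases hveq : v = n + 1
        · subst hveq
          simp [hcnt0]
          omega
        · rw [if_neg (by simp; omega)]
          simpa using hcnt' v hv
      · intro q hq
        rcases List.mem_append.1 hq with hq | hq
        · rw [List.eq_of_mem_replicate hq]; omega
        · exact hpos' q hq
    · rintro ⟨hpw, hbd, hcnt, hpos⟩
      rw [Tfin, Finset.mem_image]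
      set p := L.count (n+1) with hpdef
      have hple : p ≤ L.length := List.count_le_length
      have hsplit := countP_le_split (n+1) L
      have hgt0 : L.countP (fun q => decide (n+1 < q)) = 0 := by
        rw [List.countP_eq_zero]
        intro q hq
        have := hbd q hq
        simp
        omega
      have hcountP : L.countP (fun q => decide (n+1 ≤ q)) = p := by omega
      have htake : L.take p = List.replicate p (n+1) := by
        have hlen : (L.take p).length = p := by simp; omega
        have h0 : L.take p = List.replicate (L.take p).length (n+1) := by
          apply List.eq_replicate_of_mem
          intro b hb
          rcases List.mem_iff_getElem.1 hb with ⟨j, hj, rfl⟩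
          rw [hlen] at hj
          have hjL : j < L.length := by omega
          have hget : (L.take p)[j]'(by simp; omega) = L.getD j 0 := by
            rw [List.getElem_take, List.getD_eq_getElem _ _ hjL]
          rw [hget]
          have h1 : n + 1 ≤ L.getD j 0 := by
            by_contra hc
            push_neg at hc
            have := countP_le_le_of_getD (n+1) L hpw j hc
            omega
          have h2 : L.getD j 0 ≤ n + 1 := by
            rw [List.getD_eq_getElem _ _ hjL]
            exact hbd _ (List.getElem_mem _)
          omega
        rw [h0, hlen]
      have hdrop : L.drop p ∈ Tfin n := by
        apply (ih _).2
        refine ⟨hpw.sublist (List.drop_sublist _ _), ?_, ?_,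
          fun q hq => hpos q ((List.drop_sublist _ _).subset hq)⟩
        · intro q hq
          have hq' := hbd q ((List.drop_sublist _ _).subset hq)
          rcases List.mem_iff_getElem.1 hq with ⟨j, hj, rfl⟩
          have hjL : p + j < L.length := by
            simp at hj
            omega
          have hgd : (L.drop p)[j]'hj = L.getD (p + j) 0 := by
            rw [List.getElem_drop, List.getD_eq_getElem _ _ hjL]
          rw [hgd] at hq' ⊢
          rcases eq_or_lt_of_le hq' with heq | hlt
          · exfalso
            have := countP_ge_of_getD (n+1) L hpw (p+j) hjL (by omega)
            omega
          · omega
        · intro v hv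
          exact lt_of_le_of_lt ((List.drop_sublist _ _).count_le _) (hcnt v hv)
      refine ⟨(p, L.drop p), ?_, ?_⟩
      · rw [Finset.mem_product]
        refine ⟨Finset.mem_range.2 ?_, hdrop⟩
        have := hcnt (n+1) (by omega)
        omega
      · rw [← htake]
        exact List.take_append_drop _ _



lemma repl_inj {n : ℕ} {p q : ℕ} {L' M' : List ℕ} (hL : ∀ a ∈ L', a ≤ n) (hM : ∀ a ∈ M', a ≤ n)
    (h : List.replicate p (n+1) ++ L' = List.replicate q (n+1) ++ M') : p = q ∧ L' = M' := by
  have hcL : L'.count (n+1) = 0 := by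
    rw [List.count_eq_zero]; intro hc; have := hL _ hc; omega
  have hcM : M'.count (n+1) = 0 := by
    rw [List.count_eq_zero]; intro hc; have := hM _ hc; omega
  have hpq : p = q := by
    have := congrArg (List.count (n+1)) h
    simpa [List.count_append, List.count_replicate, hcL, hcM] using this
  subst hpq
  exact ⟨rfl, List.append_cancel_left h⟩

lemma parts_le_of_mem_Tfin {n : ℕ} {L : List ℕ} (h : L ∈ Tfin n) : ∀ p ∈ L, p ≤ n :=
  ((mem_Tfin_iff n L).1 h).2.1

lemma sum_Tfin_x (x : ℂ) : ∀ n, ∑ L ∈ Tfin n, x ^ L.length =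
    ∏ m ∈ Finset.range n, ∑ i ∈ Finset.range (m+1), x ^ i := by
  intro n
  induction n with
  | zero => simp [Tfin]
  | succ n ih =>
    rw [Tfin, Finset.sum_image ?hinj]
    case hinj =>
      rintro ⟨p, L'⟩ h1 ⟨q, M'⟩ h2 heq
      simp only [Finset.coe_product, Set.mem_prod, Finset.mem_coe] at h1 h2
      obtain ⟨hpq, hLM⟩ := repl_inj (parts_le_of_mem_Tfin h1.2) (parts_le_of_mem_Tfin h2.2) heq
      simp
      exact ⟨hpq, hLM⟩
    rw [Finset.sum_product]
    simp only [List.length_append, List.length_replicate, pow_add]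
    rw [← Finset.sum_mul_sum, ih, Finset.prod_range_succ]
    ring

lemma sum_Tfin_xz (x z : ℂ) (n : ℕ) :
    ∑ L ∈ Tfin (n+1), x ^ L.length * z ^ (L.count (n+1)) =
    (∑ i ∈ Finset.range (n+1), (x*z) ^ i) *
      ∏ m ∈ Finset.range n, ∑ i ∈ Finset.range (m+1), x ^ i := by
  rw [Tfin, Finset.sum_image ?hinj]
  case hinj =>
    rintro ⟨p, L'⟩ h1 ⟨q, M'⟩ h2 heq
    simp only [Finset.coe_product, Set.mem_prod, Finset.mem_coe] at h1 h2
    obtain ⟨hpq, hLM⟩ := repl_inj (parts_le_of_mem_Tfin h1.2) (parts_le_of_mem_Tfin h2.2) heq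
    simp
    exact ⟨hpq, hLM⟩
  rw [Finset.sum_product]
  have hterm : ∀ p ∈ Finset.range (n+1), ∀ L' ∈ Tfin n,
      x ^ (List.replicate p (n+1) ++ L').length * z ^ ((List.replicate p (n+1) ++ L').count (n+1))
      = (x*z) ^ p * x ^ L'.length := by
    intro p _ L' hL'
    have hc : L'.count (n+1) = 0 := by
      rw [List.count_eq_zero]; intro hc; have := parts_le_of_mem_Tfin hL' _ hc; omega
    rw [List.length_append, List.length_replicate, List.count_append, List.count_replicate, hc,
      if_pos (by simp)]
    rw [pow_add, mul_pow]
    ring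
  rw [Finset.sum_congr rfl (fun p hp => Finset.sum_congr rfl (fun L' hL' => hterm p hp L' hL'))]
  rw [← Finset.sum_mul_sum, sum_Tfin_x]

lemma dpp_half (n : ℕ) (hn : 0 < n) (x z : ℂ) :
    (∑ᶠ D ∈ {D | D ∈ DPPset n ∧ muDPP D = 0}, x ^ nuDPP D * z ^ rhoDPP n D) =
      (∑ i ∈ Finset.range n, (x * z) ^ i) *
        ∏ m ∈ Finset.range (n - 1), ∑ i ∈ Finset.range (m + 1), x ^ i := by
  have hset : {D | D ∈ DPPset n ∧ muDPP D = 0} = ↑((Tfin n).image build) := by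
    ext rows
    simp only [Set.mem_setOf_eq, Finset.coe_image, Set.mem_image, Finset.mem_coe]
    constructor
    · rintro ⟨⟨hD, hbd⟩, hμ0⟩
      have hμ := (muDPP_eq_zero_iff _).1 hμ0
      refine ⟨rows.flatten, ?_, build_flatten hD hμ⟩
      rw [mem_Tfin_iff]
      refine ⟨flatten_pairwise hD hμ, ?_, ?_, ?_⟩
      · intro p hp
        rcases List.mem_flatten.1 hp with ⟨r, hr, hpr⟩
        exact hbd r hr p hpr
      · intro v hv
        exact count_lt hD hμ hv
      · intro p hp
        rcases List.mem_flatten.1 hp with ⟨r, hr, hpr⟩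
        exact (hD.1 r hr).2.1 p hpr
    · rintro ⟨L, hL, rfl⟩
      rw [mem_Tfin_iff] at hL
      obtain ⟨hpw, hbd, hcnt, hpos⟩ := hL
      obtain ⟨hD, hμ, hfl⟩ := build_spec L.length L le_rfl hpw hpos hcnt
      refine ⟨⟨hD, ?_⟩, (muDPP_eq_zero_iff _).2 hμ⟩
      intro r hr p hp
      apply hbd
      rw [← hfl]
      exact List.mem_flatten.2 ⟨r, hr, hp⟩
  rw [hset, finsum_mem_coe_finset, Finset.sum_image ?hinj]
  case hinj =>
    intro L1 h1 L2 h2 heq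
    obtain ⟨hpw1, hbd1, hcnt1, hpos1⟩ := (mem_Tfin_iff n L1).1 h1
    obtain ⟨hpw2, hbd2, hcnt2, hpos2⟩ := (mem_Tfin_iff n L2).1 h2
    obtain ⟨_, _, hfl1⟩ := build_spec L1.length L1 le_rfl hpw1 hpos1 hcnt1
    obtain ⟨_, _, hfl2⟩ := build_spec L2.length L2 le_rfl hpw2 hpos2 hcnt2
    rw [← hfl1, heq, hfl2]
  have hterm : ∀ L ∈ Tfin n, x ^ nuDPP (build L) * z ^ rhoDPP n (build L)
      = x ^ L.length * z ^ (L.count n) := by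
    intro L hL
    obtain ⟨hpw, hbd, hcnt, hpos⟩ := (mem_Tfin_iff n L).1 hL
    obtain ⟨hD, hμ, hfl⟩ := build_spec L.length L le_rfl hpw hpos hcnt
    rw [nuDPP_of_muFree hμ, rhoDPP_eq, hfl]
  rw [Finset.sum_congr rfl hterm]
  obtain ⟨m, rfl⟩ : ∃ m, n = m + 1 := ⟨n - 1, by omega⟩
  rw [sum_Tfin_xz]
  simp


end DPPaux

namespace ASMaux


def Pm {n : ℕ} (σ : Equiv.Perm (Fin n)) : Matrix (Fin n) (Fin n) ℤ :=
  fun i j => if σ i = j then 1 else 0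

def invS {n : ℕ} (σ : Equiv.Perm (Fin n)) : ℕ :=
  ∑ a : Fin n, ∑ b : Fin n, if a < b ∧ σ b ≤ σ a then 1 else 0

lemma Pm_inj {n : ℕ} {σ τ : Equiv.Perm (Fin n)} (h : Pm σ = Pm τ) : σ = τ := by
  apply Equiv.ext
  intro i
  have h1 : Pm σ i (σ i) = Pm τ i (σ i) := by rw [h]
  unfold Pm at h1
  by_contra hc
  rw [if_pos rfl, if_neg (fun he => hc he.symm)] at h1
  exact one_ne_zero h1

lemma isASM_Pm {n : ℕ} (σ : Equiv.Perm (Fin n)) : IsASM n (Pm σ) := by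
  refine ⟨?_, ?_, ?_, ?_, ?_⟩
  · intro i j
    by_cases h : σ i = j <;> simp [Pm, h]
  · intro i
    simp only [Pm]
    rw [Finset.sum_ite_eq]
    simp
  · intro j
    simp only [Pm]
    have : ∀ i : Fin n, (if σ i = j then (1:ℤ) else 0) = if i = σ.symm j then 1 else 0 := by
      intro i
      congr 1
      simp [Equiv.eq_symm_apply, eq_comm]
  
    rw [Finset.sum_congr rfl (fun i _ => this i), Finset.sum_ite_eq']
    simp
  · intro i j₁ j₂ hlt h1 h2 _
    exfalso
    simp only [Pm, ne_eq] at h1 h2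
    have e1 : σ i = j₁ := by by_contra hc; exact h1 (if_neg hc)
    have e2 : σ i = j₂ := by by_contra hc; exact h2 (if_neg hc)
    rw [e1] at e2
    exact absurd e2 (ne_of_lt hlt)
  · intro j i₁ i₂ hlt h1 h2 _
    exfalso
    simp only [Pm, ne_eq] at h1 h2
    have e1 : σ i₁ = j := by by_contra hc; exact h1 (if_neg hc)
    have e2 : σ i₂ = j := by by_contra hc; exact h2 (if_neg hc)
    have : i₁ = i₂ := σ.injective (e1.trans e2.symm)
    exact absurd this (ne_of_lt hlt)

lemma muASM_Pm {n : ℕ} (σ : Equiv.Perm (Fin n)) : muASM (Pm σ) = 0 := by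
  rw [muASM, Finset.card_eq_zero, Finset.filter_eq_empty_iff]
  intro p _
  by_cases h : σ p.1 = p.2 <;> simp [Pm, h]

lemma exists_perm {n : ℕ} {A : Matrix (Fin n) (Fin n) ℤ} (hA : IsASM n A) (hμ : muASM A = 0) :
    ∃ σ : Equiv.Perm (Fin n), A = Pm σ := by
  have h01 : ∀ i j, A i j = 0 ∨ A i j = 1 := by
    intro i j
    rcases hA.1 i j with h | h | h
    · exfalso
      have : (i, j) ∈ Finset.univ.filter fun p : Fin n × Fin n => A p.1 p.2 = -1 := by
        simp [h]
      rw [muASM, Finset.card_eq_zero] at hμ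
      rw [hμ] at this
      simp at this
    · exact Or.inl h
    · exact Or.inr h
  have hnonneg : ∀ i j, 0 ≤ A i j := by
    intro i j
    rcases h01 i j with h | h <;> omega
  -- each row has an entry equal to 1
  have hex : ∀ i, ∃ j, A i j = 1 := by
    intro i
    by_contra hc
    push_neg at hc
    have : ∀ j, A i j = 0 := by
      intro j
      rcases h01 i j with h | h
      · exact h
      · exact absurd h (hc j)
    have hs := hA.2.1 i
    rw [Finset.sum_congr rfl (fun j _ => this j)] at hs
    simp at hs
  choose σ0 hσ0 using hex
  -- row uniqueness: A i j = 0 for j ≠ σ0 i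
  have hzero : ∀ i j, j ≠ σ0 i → A i j = 0 := by
    intro i j hne
    rcases h01 i j with h | h
    · exact h
    · exfalso
      have hsum := hA.2.1 i
      have : (2:ℤ) ≤ ∑ j', A i j' := by
        have h1 : A i j + A i (σ0 i) ≤ ∑ j', A i j' := by
          rw [← Finset.sum_pair hne]
          apply Finset.sum_le_sum_of_subset_of_nonneg
          · intro t _
            simp
          · intro t _ _
            exact hnonneg i t
        rw [h, hσ0 i] at h1
        omega
      omega
  -- injectivity of σ0
  have hinj : Function.Injective σ0 := by
    intro i i' he
    by_contra hne
    have hsum := hA.2.2.1 (σ0 i)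
    have hAi' : A i' (σ0 i) = 1 := by rw [he]; exact hσ0 i'
    have : (2:ℤ) ≤ ∑ i'', A i'' (σ0 i) := by
      have h1 : ∑ t ∈ ({i, i'} : Finset (Fin n)), A t (σ0 i) ≤ ∑ i'', A i'' (σ0 i) :=
        Finset.sum_le_sum_of_subset_of_nonneg (by intro t _; simp)
          (fun t _ _ => hnonneg t (σ0 i))
      have h2 : ∑ t ∈ ({i, i'} : Finset (Fin n)), A t (σ0 i) = A i (σ0 i) + A i' (σ0 i) :=
        Finset.sum_pair hne
      rw [h2, hσ0 i, hAi'] at h1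
      omega
    omega
  refine ⟨Equiv.ofBijective σ0 (Finite.injective_iff_bijective.1 hinj), ?_⟩
  ext i j
  simp only [Pm, Equiv.ofBijective_apply]
  by_cases h : σ0 i = j
  · rw [if_pos h, ← h, hσ0 i]
  · rw [if_neg h]
    exact hzero i j (fun hc => h hc.symm)


lemma nuASM_Pm {n : ℕ} (σ : Equiv.Perm (Fin n)) : nuASM (Pm σ) = (invS σ : ℤ) := by
  rw [nuASM, invS]
  push_cast
  apply Finset.sum_congr rfl
  intro i _
  apply Finset.sum_congr rfl
  intro i' _
  have hjj : ∀ j j' : Fin n, (if i < i' ∧ j' ≤ j then Pm σ i j * Pm σ i' j' else 0)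
      = if σ i = j then (if σ i' = j' then (if i < i' ∧ j' ≤ j then (1:ℤ) else 0) else 0)
        else 0 := by
    intro j j'
    unfold Pm
    by_cases h1 : σ i = j <;> by_cases h2 : σ i' = j' <;>
      by_cases h3 : i < i' ∧ j' ≤ j <;> simp [h1, h2, h3]
  rw [Finset.sum_congr rfl (fun j _ => Finset.sum_congr rfl (fun j' _ => hjj j j'))]
  rw [Finset.sum_eq_single (σ i) (fun j _ hne => Finset.sum_eq_zero
    (fun j' _ => by rw [if_neg (fun h => hne h.symm)]))
    (fun h => absurd (Finset.mem_univ _) h)]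
  simp only [eq_self_iff_true, if_true]
  rw [Finset.sum_eq_single (σ i') (fun j' _ hne => by rw [if_neg (fun h => hne h.symm)])
    (fun h => absurd (Finset.mem_univ _) h)]
  simp only [eq_self_iff_true, if_true]

open Classical in
lemma rhoASM_Pm {n : ℕ} (hn : 0 < n) (σ : Equiv.Perm (Fin n)) :
    rhoASM (Pm σ) = (σ ⟨0, hn⟩ : ℕ) := by
  rw [rhoASM]
  have hfil : (Finset.univ.filter fun j : Fin n =>
      ∃ i : Fin n, (i : ℕ) = 0 ∧ Pm σ i j = 0 ∧ ∃ j' : Fin n, j < j' ∧ Pm σ i j' = 1)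
      = Finset.univ.filter fun j : Fin n => j < σ ⟨0, hn⟩ := by
    apply Finset.filter_congr
    intro j _
    constructor
    · rintro ⟨i, hi0, hPm0, j', hjj', hPm1⟩
      have : i = ⟨0, hn⟩ := by
        apply Fin.ext
        exact hi0
      subst this
      have h1 : σ ⟨0, hn⟩ = j' := by
        by_contra hc
        unfold Pm at hPm1
        rw [if_neg hc] at hPm1
        exact absurd hPm1 zero_ne_one
      rw [h1]
      exact hjj'
    · intro hj
      refine ⟨⟨0, hn⟩, rfl, ?_, σ ⟨0, hn⟩, hj, ?_⟩
      · unfold Pm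
        rw [if_neg (fun hc => absurd hc.symm (ne_of_lt hj))]
      · unfold Pm
        rw [if_pos rfl]
  rw [hfil]
  have : (Finset.univ.filter fun j : Fin n => j < σ ⟨0, hn⟩) = Finset.Iio (σ ⟨0, hn⟩) := by
    ext j
    simp [Finset.mem_filter, Finset.mem_Iio]
  rw [this, Fin.card_Iio]


lemma succAbove_le_iff {n : ℕ} (p : Fin (n+1)) (i : Fin n) :
    p.succAbove i ≤ p ↔ (i : ℕ) < (p : ℕ) := by
  constructor
  · intro h
    rcases lt_or_ge (i.castSucc) p with h2 | h2
    · exact h2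
    · rw [Fin.succAbove_of_le_castSucc _ _ h2] at h
      simp [Fin.le_def, Fin.lt_def] at *
      omega
  · intro h
    rw [Fin.succAbove_of_castSucc_lt _ _ (by exact h)]
    simp [Fin.le_def]
    omega

def Fmap {n : ℕ} (pe : Fin (n+1) × Equiv.Perm (Fin n)) : Equiv.Perm (Fin (n+1)) :=
  ((finSuccEquiv' 0).trans pe.2.optionCongr).trans (finSuccEquiv' pe.1).symm

lemma Fmap_zero {n : ℕ} (pe : Fin (n+1) × Equiv.Perm (Fin n)) : Fmap pe 0 = pe.1 := by
  simp [Fmap, Equiv.trans_apply]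

lemma Fmap_succ {n : ℕ} (pe : Fin (n+1) × Equiv.Perm (Fin n)) (a : Fin n) :
    Fmap pe a.succ = pe.1.succAbove (pe.2 a) := by
  have h1 : (finSuccEquiv' (0 : Fin (n+1))) a.succ = some a := by
    have : a.succ = (0 : Fin (n+1)).succAbove a := by rw [Fin.succAbove_zero]
    rw [this, finSuccEquiv'_succAbove]
  simp [Fmap, Equiv.trans_apply, h1]

lemma Fmap_bijective {n : ℕ} : Function.Bijective (Fmap (n := n)) := by
  rw [Fintype.bijective_iff_injective_and_card]
  constructor
  · rintro ⟨p, e⟩ ⟨q, f⟩ h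
    have h0 : p = q := by
      have := congrArg (fun σ : Equiv.Perm (Fin (n+1)) => σ 0) h
      simpa [Fmap_zero] using this
    have he : e = f := by
      apply Equiv.ext
      intro a
      have := congrArg (fun σ : Equiv.Perm (Fin (n+1)) => σ a.succ) h
      simp only [Fmap_succ] at this
      rw [h0] at this
      exact Fin.succAbove_right_injective this
    rw [Prod.mk.injEq]
    exact ⟨h0, he⟩
  · rw [Fintype.card_prod, Fintype.card_perm, Fintype.card_perm, Fintype.card_fin,
      Fintype.card_fin, Nat.factorial_succ]

lemma sum_range_lt (p n : ℕ) (h : p ≤ n) :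
    ∑ k ∈ Finset.range n, (if k < p then (1:ℕ) else 0) = p := by
  induction n with
  | zero => simp; omega
  | succ n ih =>
    rw [Finset.sum_range_succ]
    rcases Nat.lt_or_ge n p with h1 | h1
    · -- p = n + 1
      have hp : p = n + 1 := by omega
      subst hp
      rw [if_pos h1]
      have : ∀ k ∈ Finset.range n, (if k < n+1 then (1:ℕ) else 0) = 1 := by
        intro k hk
        rw [if_pos (by simp at hk; omega)]
      rw [Finset.sum_congr rfl this]
      simp
    · rw [if_neg (by omega), ih (by omega)]
      simp

lemma invS_Fmap {n : ℕ} (pe : Fin (n+1) × Equiv.Perm (Fin n)) :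
    invS (Fmap pe) = (pe.1 : ℕ) + invS pe.2 := by
  obtain ⟨p, e⟩ := pe
  set σ := Fmap (p, e) with hσ
  rw [invS, Fin.sum_univ_succ]
  have hf0 : ∑ b : Fin (n+1), (if (0:Fin (n+1)) < b ∧ σ b ≤ σ 0 then (1:ℕ) else 0) = (p:ℕ) := by
    rw [Fin.sum_univ_succ]
    rw [if_neg (by simp)]
    have hb : ∀ b : Fin n, (if (0:Fin (n+1)) < b.succ ∧ σ b.succ ≤ σ 0 then (1:ℕ) else 0)
        = if (e b : ℕ) < (p : ℕ) then 1 else 0 := by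
      intro b
      have h1 : σ b.succ = p.succAbove (e b) := Fmap_succ (p, e) b
      have h2 : σ 0 = p := Fmap_zero (p, e)
      rw [h1, h2]
      congr 1
      simp only [eq_iff_iff]
      constructor
      · rintro ⟨_, hle⟩
        exact (succAbove_le_iff p (e b)).1 hle
      · intro hlt
        exact ⟨Fin.succ_pos b, (succAbove_le_iff p (e b)).2 hlt⟩
    rw [Finset.sum_congr rfl (fun b _ => hb b)]
    rw [Nat.zero_add, Equiv.sum_comp e (fun v : Fin n => if (v : ℕ) < (p:ℕ) then (1:ℕ) else 0),
      Fin.sum_univ_eq_sum_range (fun k => if k < (p:ℕ) then (1:ℕ) else 0) n]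
    exact sum_range_lt _ _ (by omega)
  rw [hf0]
  congr 1
  rw [invS]
  apply Finset.sum_congr rfl
  intro a _
  rw [Fin.sum_univ_succ, if_neg (by rintro ⟨h, -⟩; simp [Fin.lt_def] at h)]
  rw [Nat.zero_add]
  apply Finset.sum_congr rfl
  intro b _
  have h1 : σ a.succ = p.succAbove (e a) := Fmap_succ (p, e) a
  have h2 : σ b.succ = p.succAbove (e b) := Fmap_succ (p, e) b
  rw [h1, h2]
  congr 1
  simp only [eq_iff_iff]
  constructor
  · rintro ⟨hab, hle⟩
    exact ⟨by rwa [Fin.succ_lt_succ_iff] at hab, Fin.succAbove_le_succAbove_iff.1 hle⟩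
  · rintro ⟨hab, hle⟩
    exact ⟨Fin.succ_lt_succ_iff.2 hab, Fin.succAbove_le_succAbove_iff.2 hle⟩

lemma Gperm_eq (x : ℂ) : ∀ n : ℕ, ∑ e : Equiv.Perm (Fin n), x ^ invS e =
    ∏ m ∈ Finset.range n, ∑ i ∈ Finset.range (m+1), x ^ i := by
  have key : ∀ (n : ℕ) (z : ℂ), ∑ σ : Equiv.Perm (Fin (n+1)), x ^ invS σ * z ^ ((σ 0 : ℕ)) =
      (∑ p ∈ Finset.range (n+1), (x*z) ^ p) * ∑ e : Equiv.Perm (Fin n), x ^ invS e := by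
    intro n z
    rw [← Fintype.sum_bijective Fmap Fmap_bijective
      (fun pe => x ^ ((pe.1 : ℕ) + invS pe.2) * z ^ (pe.1 : ℕ)) _
      (fun pe => by rw [invS_Fmap, Fmap_zero])]
    rw [Fintype.sum_prod_type]
    have hp : ∀ p : Fin (n+1), ∑ e : Equiv.Perm (Fin n), x ^ ((p : ℕ) + invS e) * z ^ (p : ℕ)
        = (x*z) ^ (p:ℕ) * ∑ e : Equiv.Perm (Fin n), x ^ invS e := by
      intro p
      rw [Finset.mul_sum]
      apply Finset.sum_congr rfl
      intro e _
      rw [pow_add, mul_pow]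
      ring
    rw [Finset.sum_congr rfl (fun p _ => hp p)]
    rw [← Finset.sum_mul, Fin.sum_univ_eq_sum_range (fun k => (x*z)^k) (n+1)]
  intro n
  induction n with
  | zero =>
    have h1 : ∀ e : Equiv.Perm (Fin 0), invS e = 0 := by
      intro e
      rw [invS]
      simp
    rw [Finset.sum_congr rfl (fun e _ => by rw [h1 e, pow_zero])]
    simp [Finset.card_univ, Fintype.card_perm]
  | succ n ih =>
    have h1 : ∑ σ : Equiv.Perm (Fin (n+1)), x ^ invS σ
        = ∑ σ : Equiv.Perm (Fin (n+1)), x ^ invS σ * (1:ℂ) ^ ((σ 0 : ℕ)) := by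
      apply Finset.sum_congr rfl
      intro σ _
      rw [one_pow, mul_one]
    rw [h1, key n 1, ih, Finset.prod_range_succ, mul_one]
    ring

lemma asm_half (n : ℕ) (hn : 0 < n) (x z : ℂ) :
    (∑ᶠ A ∈ {A : Matrix (Fin n) (Fin n) ℤ | IsASM n A ∧ muASM A = 0},
        x ^ nuASM A * z ^ rhoASM A) =
      (∑ i ∈ Finset.range n, (x * z) ^ i) *
        ∏ m ∈ Finset.range (n - 1), ∑ i ∈ Finset.range (m + 1), x ^ i := by
  have hset : {A : Matrix (Fin n) (Fin n) ℤ | IsASM n A ∧ muASM A = 0}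
      = ↑((Finset.univ : Finset (Equiv.Perm (Fin n))).image Pm) := by
    ext A
    simp only [Set.mem_setOf_eq, Finset.coe_image, Set.mem_image, Finset.mem_coe,
      Finset.coe_univ, Set.image_univ, Set.mem_range]
    constructor
    · rintro ⟨hA, hμ⟩
      rcases exists_perm hA hμ with ⟨σ, rfl⟩
      exact ⟨σ, rfl⟩
    · rintro ⟨σ, rfl⟩
      exact ⟨isASM_Pm σ, muASM_Pm σ⟩
  rw [hset, finsum_mem_coe_finset,
    Finset.sum_image (fun σ _ τ _ h => Pm_inj h)]
  have hterm : ∀ σ : Equiv.Perm (Fin n), x ^ nuASM (Pm σ) * z ^ rhoASM (Pm σ)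
      = x ^ invS σ * z ^ ((σ ⟨0, hn⟩ : ℕ)) := by
    intro σ
    rw [nuASM_Pm, rhoASM_Pm hn, zpow_natCast]
  rw [Finset.sum_congr rfl (fun σ _ => hterm σ)]
  obtain ⟨m, rfl⟩ : ∃ m, n = m + 1 := ⟨n - 1, by omega⟩
  have h0 : (⟨0, hn⟩ : Fin (m+1)) = 0 := rfl
  have key : ∀ (z : ℂ), ∑ σ : Equiv.Perm (Fin (m+1)), x ^ invS σ * z ^ ((σ 0 : ℕ)) =
      (∑ p ∈ Finset.range (m+1), (x*z) ^ p) * ∑ e : Equiv.Perm (Fin m), x ^ invS e := by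
    intro z
    rw [← Fintype.sum_bijective Fmap Fmap_bijective
      (fun pe => x ^ ((pe.1 : ℕ) + invS pe.2) * z ^ (pe.1 : ℕ)) _
      (fun pe => by rw [invS_Fmap, Fmap_zero])]
    rw [Fintype.sum_prod_type]
    have hp : ∀ p : Fin (m+1), ∑ e : Equiv.Perm (Fin m), x ^ ((p : ℕ) + invS e) * z ^ (p : ℕ)
        = (x*z) ^ (p:ℕ) * ∑ e : Equiv.Perm (Fin m), x ^ invS e := by
      intro p
      rw [Finset.mul_sum]
      apply Finset.sum_congr rfl
      intro e _
      rw [pow_add, mul_pow]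
      ring
    rw [Finset.sum_congr rfl (fun p _ => hp p)]
    rw [← Finset.sum_mul, Fin.sum_univ_eq_sum_range (fun k => (x*z)^k) (m+1)]
  rw [h0, key z, Gperm_eq]
  simp


end ASMaux

/-- Weighted enumeration of permutation matrices (ASMs with μ = 0) and of DPPs with no
special parts: both generating functions equal [n]_{xz} [n−1]_x!. -/
theorem mu_zero_generating_functions (n : ℕ) (hn : 0 < n) (x z : ℂ) :
    ((∑ᶠ A ∈ {A : Matrix (Fin n) (Fin n) ℤ | IsASM n A ∧ muASM A = 0},
        x ^ nuASM A * z ^ rhoASM A) =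
      (∑ i ∈ Finset.range n, (x * z) ^ i) *
        ∏ m ∈ Finset.range (n - 1), ∑ i ∈ Finset.range (m + 1), x ^ i) ∧
    ((∑ᶠ D ∈ {D | D ∈ DPPset n ∧ muDPP D = 0},
        x ^ nuDPP D * z ^ rhoDPP n D) =
      (∑ i ∈ Finset.range n, (x * z) ^ i) *
        ∏ m ∈ Finset.range (n - 1), ∑ i ∈ Finset.range (m + 1), x ^ i) :=
  ⟨ASMaux.asm_half n hn x z, DPPaux.dpp_half n hn x z⟩
end

section
/- For every integer n ≥ 2 and all complex numbers x, y: ∑_{A ∈ ASM(n), ρ(A)=0} x^{ν(A)} y^{μ(A)} = ∑_{A' ∈ ASM(n−1)} x^{ν(A')} y^{μ(A')}, and ∑_{D ∈ DPP(n), ρ(D)=0} x^{ν(D)} y^{μ(D)} = ∑_{D' ∈ DPP(n−1)} x^{ν(D')} y^{μ(D')}. -/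
open Finset Matrix

lemma first_nonzero_eq_one {N : ℕ} (f : Fin N → ℤ)
    (halt : ∀ j₁ j₂ : Fin N, j₁ < j₂ → f j₁ ≠ 0 → f j₂ ≠ 0 →
      (∀ j, j₁ < j → j < j₂ → f j = 0) → f j₂ = -f j₁)
    (hsum : ∑ j, f j = 1) :
    ∀ j : Fin N, f j ≠ 0 → (∀ k, k < j → f k = 0) → f j = 1 := by
  set F : ℕ → ℤ := fun k => if h : k < N then f ⟨k, h⟩ else 0 with hF
  have hFval : ∀ j : Fin N, F (j : ℕ) = f j := by
    intro j; simp [hF, j.isLt]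
  have halt' : ∀ a b : ℕ, a < b → F a ≠ 0 → F b ≠ 0 →
      (∀ c, a < c → c < b → F c = 0) → F b = -F a := by
    intro a b hab ha hb hmid
    have hbN : b < N := by by_contra h; exact hb (by simp [hF, h])
    have haN : a < N := lt_trans hab hbN
    have := halt ⟨a, haN⟩ ⟨b, hbN⟩ hab (by rwa [hFval ⟨a, haN⟩] at ha)
      (by rwa [hFval ⟨b, hbN⟩] at hb) ?_
    · rw [← hFval ⟨a, haN⟩, ← hFval ⟨b, hbN⟩] at this; exact this
    · intro c h1 h2
      rw [← hFval c]; exact hmid c h1 h2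
  set P : ℕ → ℤ := fun t => ∑ k ∈ Finset.range t, F k with hP
  have hPsucc : ∀ t, P (t + 1) = P t + F t := fun t => Finset.sum_range_succ F t
  have hPN : P N = 1 := by
    rw [hP]
    simp only
    rw [← Fin.sum_univ_eq_sum_range F N]
    rw [← hsum]
    exact Finset.sum_congr rfl fun j _ => hFval j
  have key : ∀ t, (P t = 0 ∧ ∀ k < t, F k = 0) ∨
      ∃ k₀ k, k₀ < t ∧ k < t ∧ F k₀ ≠ 0 ∧ (∀ k' < k₀, F k' = 0) ∧
        (∀ k', k < k' → k' < t → F k' = 0) ∧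
        ((P t = F k₀ ∧ F k = F k₀) ∨ (P t = 0 ∧ F k = -F k₀)) := by
    intro t
    induction t with
    | zero => exact Or.inl ⟨by simp [hP], fun k hk => absurd hk (Nat.not_lt_zero k)⟩
    | succ t ih =>
      by_cases hFt : F t = 0
      · rcases ih with ⟨h0, hall⟩ | ⟨k₀, k, h1, h2, h3, h4, h5, h6⟩
        · refine Or.inl ⟨by rw [hPsucc, h0, hFt, add_zero], fun k hk => ?_⟩
          rcases Nat.lt_succ_iff_lt_or_eq.mp hk with h | rfl
          · exact hall k h
          · exact hFt
        · refine Or.inr ⟨k₀, k, Nat.lt_succ_of_lt h1, Nat.lt_succ_of_lt h2, h3, h4, ?_, ?_⟩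
          · intro k' hk' hk''
            rcases Nat.lt_succ_iff_lt_or_eq.mp hk'' with h | rfl
            · exact h5 k' hk' h
            · exact hFt
          · rw [hPsucc, hFt, add_zero]; exact h6
      · rcases ih with ⟨h0, hall⟩ | ⟨k₀, k, h1, h2, h3, h4, h5, h6⟩
        · refine Or.inr ⟨t, t, Nat.lt_succ_self t, Nat.lt_succ_self t, hFt, hall, ?_, ?_⟩
          · intro k' hk' hk''; omega
          · exact Or.inl ⟨by rw [hPsucc, h0, zero_add], rfl⟩
        · have hFk : F k ≠ 0 := by
            rcases h6 with ⟨_, h⟩ | ⟨_, h⟩ <;> rw [h] <;> simpa using h3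
          have hft : F t = -F k := halt' k t h2 hFk hFt (fun c hc1 hc2 => h5 c hc1 hc2)
          refine Or.inr ⟨k₀, t, Nat.lt_succ_of_lt h1, Nat.lt_succ_self t, h3, h4,
            fun k' hk' hk'' => by omega, ?_⟩
          rcases h6 with ⟨hp, hfk⟩ | ⟨hp, hfk⟩
          · exact Or.inr ⟨by rw [hPsucc, hp, hft, hfk]; ring, by rw [hft, hfk]⟩
          · exact Or.inl ⟨by rw [hPsucc, hp, hft, hfk]; ring, by rw [hft, hfk]; ring⟩
  rcases key N with ⟨h0, _⟩ | ⟨k₀, k, h1, h2, h3, h4, h5, h6⟩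
  · rw [hPN] at h0; exact absurd h0 one_ne_zero
  · have hk₀1 : F k₀ = 1 := by
      rcases h6 with ⟨hp, _⟩ | ⟨hp, _⟩
      · rw [← hp, hPN]
      · rw [hPN] at hp; exact absurd hp one_ne_zero
    intro j hj hjz
    have hjk : (j : ℕ) = k₀ := by
      rcases lt_trichotomy (j : ℕ) k₀ with h | h | h
      · exact absurd (h4 j h) (by rwa [hFval j])
      · exact h
      · exfalso
        have hz : f ⟨k₀, h1⟩ = 0 := hjz ⟨k₀, h1⟩ (by simpa [Fin.lt_def] using h)
        exact h3 ((hFval ⟨k₀, h1⟩).trans hz)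
    rw [← hFval j, hjk]
    exact hk₀1

/-- Extend an (m×m) matrix to (m+1)×(m+1) by adding a new first row and column
that are `e₁`. -/
def ext1 {m : ℕ} (B : Matrix (Fin m) (Fin m) ℤ) : Matrix (Fin (m + 1)) (Fin (m + 1)) ℤ :=
  fun i j =>
    Fin.cases (Fin.cases 1 (fun _ => 0) j) (fun i' => Fin.cases 0 (fun j' => B i' j') j) i

@[simp] lemma ext1_zero_zero {m : ℕ} (B : Matrix (Fin m) (Fin m) ℤ) : ext1 B 0 0 = 1 := rfl
@[simp] lemma ext1_zero_succ {m : ℕ} (B : Matrix (Fin m) (Fin m) ℤ) (j : Fin m) :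
    ext1 B 0 j.succ = 0 := by simp [ext1]
@[simp] lemma ext1_succ_zero {m : ℕ} (B : Matrix (Fin m) (Fin m) ℤ) (i : Fin m) :
    ext1 B i.succ 0 = 0 := by simp [ext1]
@[simp] lemma ext1_succ_succ {m : ℕ} (B : Matrix (Fin m) (Fin m) ℤ) (i j : Fin m) :
    ext1 B i.succ j.succ = B i j := by simp [ext1]

lemma ext1_inj {m : ℕ} : Function.Injective (ext1 (m := m)) := by
  intro B B' h
  funext i j
  have := congrFun (congrFun h i.succ) j.succ
  simpa using this

lemma ext1_rho {m : ℕ} (B : Matrix (Fin m) (Fin m) ℤ) : rhoASM (ext1 B) = 0 := by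
  classical
  unfold rhoASM
  rw [Finset.card_eq_zero, Finset.filter_eq_empty_iff]
  rintro j - ⟨i, hi, hz, j', hlt, h1⟩
  have hi0 : i = 0 := Fin.ext (by simpa using hi)
  subst hi0
  rcases Fin.eq_zero_or_eq_succ j' with rfl | ⟨c, rfl⟩
  · exact Fin.not_lt_zero j hlt
  · rw [ext1_zero_succ] at h1
    exact zero_ne_one h1

lemma ext1_nu {m : ℕ} (B : Matrix (Fin m) (Fin m) ℤ) : nuASM (ext1 B) = nuASM B := by
  unfold nuASM
  simp [Fin.sum_univ_succ, Fin.succ_lt_succ_iff, Fin.succ_le_succ_iff, Fin.le_zero_iff,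
    Fin.succ_ne_zero, Fin.not_lt_zero, Finset.mul_sum, Finset.sum_ite_eq]

lemma ext1_mu {m : ℕ} (B : Matrix (Fin m) (Fin m) ℤ) : muASM (ext1 B) = muASM B := by
  unfold muASM
  rw [Finset.card_filter, Finset.card_filter, Fintype.sum_prod_type, Fintype.sum_prod_type]
  simp only [Fin.sum_univ_succ, ext1_zero_zero, ext1_zero_succ, ext1_succ_zero, ext1_succ_succ]
  norm_num

lemma ext1_isASM {m : ℕ} {B : Matrix (Fin m) (Fin m) ℤ} (hB : IsASM m B) :
    IsASM (m + 1) (ext1 B) := by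
  obtain ⟨h01, hrow, hcol, haltr, haltc⟩ := hB
  refine ⟨?_, ?_, ?_, ?_, ?_⟩
  · intro i j
    induction i using Fin.cases with
    | zero =>
      induction j using Fin.cases with
      | zero => simp
      | succ j => simp
    | succ i =>
      induction j using Fin.cases with
      | zero => simp
      | succ j => simpa using h01 i j
  · intro i
    induction i using Fin.cases with
    | zero => simp [Fin.sum_univ_succ]
    | succ i => simpa [Fin.sum_univ_succ] using hrow i
  · intro j
    induction j using Fin.cases with
    | zero => simp [Fin.sum_univ_succ]
    | succ j => simpa [Fin.sum_univ_succ] using hcol j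
  · intro i j₁ j₂ hlt h1 h2 hmid
    induction i using Fin.cases with
    | zero =>
      exfalso
      rcases Fin.eq_zero_or_eq_succ j₂ with rfl | ⟨c, rfl⟩
      · exact Fin.not_lt_zero j₁ hlt
      · rw [ext1_zero_succ] at h2; exact h2 rfl
    | succ i =>
      rcases Fin.eq_zero_or_eq_succ j₁ with rfl | ⟨b, rfl⟩
      · rw [ext1_succ_zero] at h1; exact absurd rfl h1
      rcases Fin.eq_zero_or_eq_succ j₂ with rfl | ⟨c, rfl⟩
      · exact absurd hlt (Fin.not_lt_zero _)
      rw [ext1_succ_succ] at h1 h2 ⊢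
      rw [ext1_succ_succ]
      refine haltr i b c (Fin.succ_lt_succ_iff.mp hlt) h1 h2 ?_
      intro j hj1 hj2
      have := hmid j.succ (Fin.succ_lt_succ_iff.mpr hj1) (Fin.succ_lt_succ_iff.mpr hj2)
      simpa using this
  · intro j i₁ i₂ hlt h1 h2 hmid
    induction j using Fin.cases with
    | zero =>
      exfalso
      rcases Fin.eq_zero_or_eq_succ i₂ with rfl | ⟨c, rfl⟩
      · exact Fin.not_lt_zero i₁ hlt
      · rw [ext1_succ_zero] at h2; exact h2 rfl
    | succ j =>
      rcases Fin.eq_zero_or_eq_succ i₁ with rfl | ⟨b, rfl⟩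
      · rw [ext1_zero_succ] at h1; exact absurd rfl h1
      rcases Fin.eq_zero_or_eq_succ i₂ with rfl | ⟨c, rfl⟩
      · exact absurd hlt (Fin.not_lt_zero _)
      rw [ext1_succ_succ] at h1 h2 ⊢
      rw [ext1_succ_succ]
      refine haltc j b c (Fin.succ_lt_succ_iff.mp hlt) h1 h2 ?_
      intro i hi1 hi2
      have := hmid i.succ (Fin.succ_lt_succ_iff.mpr hi1) (Fin.succ_lt_succ_iff.mpr hi2)
      simpa using this

lemma isASM_of_ext1 {m : ℕ} {B : Matrix (Fin m) (Fin m) ℤ} (h : IsASM (m + 1) (ext1 B)) :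
    IsASM m B := by
  obtain ⟨h01, hrow, hcol, haltr, haltc⟩ := h
  refine ⟨fun i j => by simpa using h01 i.succ j.succ, ?_, ?_, ?_, ?_⟩
  · intro i
    have := hrow i.succ
    simpa [Fin.sum_univ_succ] using this
  · intro j
    have := hcol j.succ
    simpa [Fin.sum_univ_succ] using this
  · intro i j₁ j₂ hlt h1 h2 hmid
    have := haltr i.succ j₁.succ j₂.succ (Fin.succ_lt_succ_iff.mpr hlt)
      (by simpa using h1) (by simpa using h2) ?_
    · simpa using this
    · intro j hj1 hj2
      rcases Fin.eq_zero_or_eq_succ j with rfl | ⟨c, rfl⟩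
      · simp
      · rw [ext1_succ_succ]
        exact hmid c (Fin.succ_lt_succ_iff.mp hj1) (Fin.succ_lt_succ_iff.mp hj2)
  · intro j i₁ i₂ hlt h1 h2 hmid
    have := haltc j.succ i₁.succ i₂.succ (Fin.succ_lt_succ_iff.mpr hlt)
      (by simpa using h1) (by simpa using h2) ?_
    · simpa using this
    · intro i hi1 hi2
      rcases Fin.eq_zero_or_eq_succ i with rfl | ⟨c, rfl⟩
      · simp
      · rw [ext1_succ_succ]
        exact hmid c (Fin.succ_lt_succ_iff.mp hi1) (Fin.succ_lt_succ_iff.mp hi2)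

lemma asm_struct {m : ℕ} {A : Matrix (Fin (m + 1)) (Fin (m + 1)) ℤ}
    (hA : IsASM (m + 1) A) (hρ : rhoASM A = 0) :
    A = ext1 (fun i j => A i.succ j.succ) := by
  obtain ⟨h01, hrow, hcol, haltr, haltc⟩ := hA
  -- any nonzero entry of row 0 equals 1 (it is the first nonzero entry of its column)
  have hr0 : ∀ j, A 0 j ≠ 0 → A 0 j = 1 := by
    intro j hj
    exact first_nonzero_eq_one (fun i => A i j) (haltc j) (hcol j) 0 hj
      (fun k hk => absurd hk (Fin.not_lt_zero k))
  -- the first nonzero entry of any row equals 1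
  have hrfirst : ∀ i j, A i j ≠ 0 → (∀ k, k < j → A i k = 0) → A i j = 1 :=
    fun i => first_nonzero_eq_one (A i) (haltr i) (hrow i)
  -- row 0 has a nonzero entry
  have hex : ∃ j, A 0 j ≠ 0 := by
    by_contra h
    push_neg at h
    have : (1 : ℤ) = 0 := by rw [← hrow 0]; exact Finset.sum_eq_zero fun j _ => h j
    exact one_ne_zero this
  set T : Finset (Fin (m + 1)) := Finset.univ.filter (fun j => A 0 j ≠ 0) with hT
  have hTne : T.Nonempty := by
    obtain ⟨j, hj⟩ := hex
    exact ⟨j, by simp [hT, hj]⟩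
  set j₁ : Fin (m + 1) := T.min' hTne with hj₁
  have hj₁mem : A 0 j₁ ≠ 0 := (Finset.mem_filter.mp (T.min'_mem hTne)).2
  -- row 0 has a unique nonzero entry, namely j₁
  have huniq : ∀ j, j ≠ j₁ → A 0 j = 0 := by
    intro j hj
    by_contra hnz
    have hj₁le : j₁ < j := lt_of_le_of_ne (T.min'_le j (by simp [hT, hnz])) (Ne.symm hj)
    set U : Finset (Fin (m + 1)) := Finset.univ.filter (fun k => j₁ < k ∧ A 0 k ≠ 0) with hU
    have hUne : U.Nonempty := ⟨j, by simp [hU, hj₁le, hnz]⟩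
    set j₂ : Fin (m + 1) := U.min' hUne with hj₂
    have hj₂mem : j₁ < j₂ ∧ A 0 j₂ ≠ 0 := (Finset.mem_filter.mp (U.min'_mem hUne)).2
    have hmid : ∀ k, j₁ < k → k < j₂ → A 0 k = 0 := by
      intro k hk1 hk2
      by_contra hknz
      have : j₂ ≤ k := U.min'_le k (by simp [hU, hk1, hknz])
      exact absurd hk2 (not_lt.mpr this)
    have halt := haltr 0 j₁ j₂ hj₂mem.1 hj₁mem hj₂mem.2 hmid
    rw [hr0 j₁ hj₁mem, hr0 j₂ hj₂mem.2] at halt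
    norm_num at halt
  -- j₁ = 0, using ρ(A) = 0
  have hj₁0 : j₁ = 0 := by
    by_contra hne
    classical
    have h0lt : (0 : Fin (m + 1)) < j₁ := Fin.pos_of_ne_zero hne
    have hmem : (0 : Fin (m + 1)) ∈ Finset.univ.filter (fun j : Fin (m + 1) =>
        ∃ i : Fin (m + 1), (i : ℕ) = 0 ∧ A i j = 0 ∧ ∃ j' : Fin (m + 1), j < j' ∧ A i j' = 1) := by
      simp only [Finset.mem_filter, Finset.mem_univ, true_and]
      exact ⟨0, rfl, huniq 0 (Ne.symm hne), j₁, h0lt, hr0 j₁ hj₁mem⟩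
    have : 0 < rhoASM A := Finset.card_pos.mpr ⟨0, hmem⟩
    omega
  have hA00 : A 0 0 = 1 := by have := hr0 j₁ hj₁mem; rwa [hj₁0] at this
  have hrow0 : ∀ j : Fin m, A 0 j.succ = 0 := fun j =>
    huniq j.succ (by rw [hj₁0]; exact Fin.succ_ne_zero j)
  -- column 0 vanishes below the first entry
  have hcol0 : ∀ i : Fin m, A i.succ 0 = 0 := by
    intro i
    by_contra hnz
    set V : Finset (Fin (m + 1)) := Finset.univ.filter (fun k => k ≠ 0 ∧ A k 0 ≠ 0) with hV
    have hVne : V.Nonempty := ⟨i.succ, by simp [hV, hnz, Fin.succ_ne_zero]⟩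
    set i₂ : Fin (m + 1) := V.min' hVne with hi₂
    have hi₂mem : i₂ ≠ 0 ∧ A i₂ 0 ≠ 0 := (Finset.mem_filter.mp (V.min'_mem hVne)).2
    have h0lt : (0 : Fin (m + 1)) < i₂ := Fin.pos_of_ne_zero hi₂mem.1
    have hmid : ∀ k, (0 : Fin (m + 1)) < k → k < i₂ → A k 0 = 0 := by
      intro k hk1 hk2
      by_contra hknz
      have : i₂ ≤ k := V.min'_le k (by simp [hV, hknz, Fin.pos_iff_ne_zero.mp hk1])
      exact absurd hk2 (not_lt.mpr this)
    have halt := haltc 0 0 i₂ h0lt (by rw [hA00]; exact one_ne_zero) hi₂mem.2 hmid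
    rw [hA00] at halt
    have hfirst := hrfirst i₂ 0 hi₂mem.2 (fun k hk => absurd hk (Fin.not_lt_zero k))
    rw [hfirst] at halt
    norm_num at halt
  funext i j
  induction i using Fin.cases with
  | zero =>
    induction j using Fin.cases with
    | zero => exact hA00.trans (ext1_zero_zero _).symm
    | succ j => exact (hrow0 j).trans (ext1_zero_succ _ j).symm
  | succ i =>
    induction j using Fin.cases with
    | zero => exact (hcol0 i).trans (ext1_succ_zero _ i).symm
    | succ j => exact (ext1_succ_succ (fun i j => A i.succ j.succ) i j).symm

lemma asm_set_eq {m : ℕ} :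
    {A : Matrix (Fin (m + 1)) (Fin (m + 1)) ℤ | IsASM (m + 1) A ∧ rhoASM A = 0} =
      ext1 '' {B : Matrix (Fin m) (Fin m) ℤ | IsASM m B} := by
  ext A
  constructor
  · rintro ⟨hA, hρ⟩
    refine ⟨fun i j => A i.succ j.succ, ?_, (asm_struct hA hρ).symm⟩
    exact isASM_of_ext1 (by rw [← asm_struct hA hρ]; exact hA)
  · rintro ⟨B, hB, rfl⟩
    exact ⟨ext1_isASM hB, ext1_rho B⟩

lemma asm_part (m : ℕ) (x y : ℂ) :
    (∑ᶠ A ∈ {A : Matrix (Fin (m + 1)) (Fin (m + 1)) ℤ | IsASM (m + 1) A ∧ rhoASM A = 0},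
        x ^ nuASM A * y ^ muASM A) =
      ∑ᶠ A ∈ {A : Matrix (Fin m) (Fin m) ℤ | IsASM m A},
        x ^ nuASM A * y ^ muASM A := by
  rw [asm_set_eq, finsum_mem_image (f := fun A => x ^ nuASM A * y ^ muASM A) (ext1_inj.injOn)]
  exact finsum_mem_congr rfl fun B _ => by rw [ext1_nu, ext1_mu]

/-- The ρ = 0 part of the order-n generating function equals the full order-(n−1)
generating function, for both ASMs and DPPs. -/
theorem rho_zero_reduction (n : ℕ) (hn : 2 ≤ n) (x y : ℂ) :
    ((∑ᶠ A ∈ {A : Matrix (Fin n) (Fin n) ℤ | IsASM n A ∧ rhoASM A = 0},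
        x ^ nuASM A * y ^ muASM A) =
      ∑ᶠ A ∈ {A : Matrix (Fin (n - 1)) (Fin (n - 1)) ℤ | IsASM (n - 1) A},
        x ^ nuASM A * y ^ muASM A) ∧
    ((∑ᶠ D ∈ {D | D ∈ DPPset n ∧ rhoDPP n D = 0},
        x ^ nuDPP D * y ^ muDPP D) =
      ∑ᶠ D ∈ DPPset (n - 1), x ^ nuDPP D * y ^ muDPP D) := by
  constructor
  · obtain ⟨m, rfl⟩ : ∃ m, n = m + 1 := ⟨n - 1, by omega⟩
    exact asm_part m x y
  · have hset : {D | D ∈ DPPset n ∧ rhoDPP n D = 0} = DPPset (n - 1) := by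
      ext D
      constructor
      · rintro ⟨hmem, hρ⟩
        obtain ⟨hD, hle⟩ := hmem
        replace hρ : (D.map fun r => r.count n).sum = 0 := hρ
        refine ⟨hD, fun r hr p hp => ?_⟩
        have h1 : p ≤ n := hle r hr p hp
        have h2 : r.count n = 0 :=
          List.sum_eq_zero_iff.mp hρ (r.count n) (List.mem_map_of_mem hr)
        have h3 : p ≠ n := by rintro rfl; exact List.count_eq_zero.mp h2 hp
        omega
      · rintro ⟨hD, hle⟩
        refine ⟨⟨hD, fun r hr p hp => le_trans (hle r hr p hp) (by omega)⟩, ?_⟩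
        show (D.map fun r => r.count n).sum = 0
        refine List.sum_eq_zero fun c hc => ?_
        obtain ⟨r, hr, rfl⟩ := List.mem_map.mp hc
        refine List.count_eq_zero.mpr fun hmem => ?_
        have := hle r hr n hmem
        omega
    rw [hset]
end
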